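/- Duality exchanges flattening points and vertices: for a generic polygon X (no four consecutive nodes coplanar) with parallel transversal field U and dual pair (Y,V), the node i is a flattening point of X (Δ(i-1/2)·Δ(i+1/2) < 0) if and only if the edge i is a vertex of (Y,V) (b(Y,V)'(i-1/2)·b(Y,V)'(i+1/2) < 0). -/
import Mathlib

open Matrix

noncomputable def det3 (a b c : Fin 3 → ℝ) : ℝ := Matrix.det (Matrix.of ![a, b, c])

lemma det3_expand (a b c : Fin 3 → ℝ) :
    det3 a b c = a 0 * (b 1 * c 2 - b 2 * c 1) - a 1 * (b 0 * c 2 - b 2 * c 0)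
      + a 2 * (b 0 * c 1 - b 1 * c 0) := by
  simp [det3, Matrix.det_fin_three]
  ring

lemma dot_expand (a b : Fin 3 → ℝ) : a ⬝ᵥ b = a 0 * b 0 + a 1 * b 1 + a 2 * b 2 := by
  simp [dotProduct, Fin.sum_univ_three]

lemma cramer3 (a b c w y : Fin 3 → ℝ) :
    (y ⬝ᵥ w) * det3 a b c =
      (y ⬝ᵥ a) * det3 w b c + (y ⬝ᵥ b) * det3 a w c + (y ⬝ᵥ c) * det3 a b w := by
  simp only [det3_expand, dot_expand]
  ring

lemma pw_eq (x0 x1 x2 : Fin 3 → ℝ) : det3 (x1 - x0) x2 x0 = det3 x0 x1 x2 := by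
  simp only [det3_expand, Pi.sub_apply]
  ring

lemma main_id (x0 x1 x2 x3 u : Fin 3 → ℝ) (β : ℝ) :
    (det3 (x2 - x1) (u - β • (x1 - x0)) x1 - det3 (x2 - x1) (u - β • (x1 - x0)) x3) *
        det3 (x1 - x0) x2 x0
      - (det3 (x1 - x0) u x0 - det3 (x1 - x0) u x2) * det3 (x2 - x1) x3 x1
    = det3 x1 x2 (u - β • (x1 - x0)) * det3 (x3 - x2) (x2 - x1) (x1 - x0) := by
  simp only [det3_expand, Pi.sub_apply, Pi.smul_apply, smul_eq_mul]
  ring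

/-- for a generic polygon, node i is a flattening point of X iff
edge i is a vertex of the dual pair (Y,V). -/
theorem flattening_iff_dual_vertex
    (X U Y V : ℤ → Fin 3 → ℝ) (b bYV : ℤ → ℝ)
    (hconv : ∀ j, 0 < det3 (X (j - 1)) (X j) (X (j + 1)))
    (htrans : ∀ j, 0 < det3 (X j) (X (j + 1)) (U j))
    (hpar : ∀ j, U (j + 1) - U j = -b j • (X (j + 1) - X j))
    (hgen : ∀ j, det3 (X (j + 2) - X (j + 1)) (X (j + 1) - X j) (X j - X (j - 1)) ≠ 0)
    (hY1 : ∀ j, Y j ⬝ᵥ (X (j + 1) - X j) = 0)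
    (hY2 : ∀ j, Y j ⬝ᵥ U j = 1)
    (hY3 : ∀ j, Y j ⬝ᵥ X j = 0)
    (hV1 : ∀ j, V j ⬝ᵥ (X (j + 1) - X j) = 0)
    (hV2 : ∀ j, V j ⬝ᵥ U j = 0)
    (hV3 : ∀ j, V j ⬝ᵥ X j = 1)
    (hdualpar : ∀ j, V j - V (j - 1) = -bYV j • (Y j - Y (j - 1)))
    (i : ℤ) :
    det3 (X (i + 1) - X i) (X i - X (i - 1)) (X (i - 1) - X (i - 2)) *
        det3 (X (i + 2) - X (i + 1)) (X (i + 1) - X i) (X i - X (i - 1)) < 0 ↔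
      (bYV i - bYV (i - 1)) * (bYV (i + 1) - bYV i) < 0 := by
  -- key scalar relation for each node
  have key : ∀ j : ℤ, bYV j * det3 (X j - X (j - 1)) (X (j + 1)) (X (j - 1)) =
      det3 (X j - X (j - 1)) (U (j - 1)) (X (j - 1))
        - det3 (X j - X (j - 1)) (U (j - 1)) (X (j + 1)) := by
    intro j
    have e1 : (j : ℤ) - 1 + 1 = j := by ring
    have h1 : Y (j - 1) ⬝ᵥ (X j - X (j - 1)) = 0 := by
      have := hY1 (j - 1); rwa [e1] at this
    have h2 : Y (j - 1) ⬝ᵥ U (j - 1) = 1 := hY2 (j - 1)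
    have h3 : Y (j - 1) ⬝ᵥ X (j - 1) = 0 := hY3 (j - 1)
    have g1 : V (j - 1) ⬝ᵥ (X j - X (j - 1)) = 0 := by
      have := hV1 (j - 1); rwa [e1] at this
    have g2 : V (j - 1) ⬝ᵥ U (j - 1) = 0 := hV2 (j - 1)
    have g3 : V (j - 1) ⬝ᵥ X (j - 1) = 1 := hV3 (j - 1)
    have hv : V j ⬝ᵥ X (j + 1) = 1 := by
      have a1 := hV1 j; have a3 := hV3 j
      rw [dotProduct_sub] at a1; linarith
    have hy : Y j ⬝ᵥ X (j + 1) = 0 := by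
      have a1 := hY1 j; have a3 := hY3 j
      rw [dotProduct_sub] at a1; linarith
    have ht := cramer3 (X j - X (j - 1)) (U (j - 1)) (X (j - 1)) (X (j + 1)) (Y (j - 1))
    rw [h1, h2, h3] at ht
    simp only [zero_mul, one_mul, add_zero, zero_add] at ht
    have hs := cramer3 (X j - X (j - 1)) (U (j - 1)) (X (j - 1)) (X (j + 1)) (V (j - 1))
    rw [g1, g2, g3] at hs
    simp only [zero_mul, one_mul, add_zero, zero_add] at hs
    have hd : V j ⬝ᵥ X (j + 1) - V (j - 1) ⬝ᵥ X (j + 1) =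
        -bYV j * (Y j ⬝ᵥ X (j + 1) - Y (j - 1) ⬝ᵥ X (j + 1)) := by
      have := congrArg (fun z => z ⬝ᵥ X (j + 1)) (hdualpar j)
      simpa [sub_dotProduct, smul_dotProduct, neg_mul] using this
    rw [hv, hy] at hd
    linear_combination (-(bYV j)) * ht - hs
      - det3 (X j - X (j - 1)) (U (j - 1)) (X (j - 1)) * hd

  have step : ∀ j : ℤ, (bYV (j + 1) - bYV j) *
      (det3 (X j - X (j - 1)) (X (j + 1)) (X (j - 1)) *
        det3 (X (j + 1) - X j) (X (j + 2)) (X j)) =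
      det3 (X j) (X (j + 1)) (U j) *
        det3 (X (j + 2) - X (j + 1)) (X (j + 1) - X j) (X j - X (j - 1)) := by
    intro j
    have e1 : (j : ℤ) - 1 + 1 = j := by ring
    have hp := hpar (j - 1)
    rw [e1] at hp
    have hU : U (j - 1) - b (j - 1) • (X j - X (j - 1)) = U j := by
      funext k
      have := congrFun hp k
      simp only [Pi.sub_apply, Pi.smul_apply, Pi.neg_apply, smul_eq_mul, neg_mul] at this ⊢
      linarith
    have km := main_id (X (j - 1)) (X j) (X (j + 1)) (X (j + 2)) (U (j - 1)) (b (j - 1))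
    rw [hU] at km
    have k1 := key j
    have k2 := key (j + 1)
    rw [show (j : ℤ) + 1 - 1 = j from by ring, show (j : ℤ) + 1 + 1 = j + 2 from by ring] at k2
    linear_combination det3 (X j - X (j - 1)) (X (j + 1)) (X (j - 1)) * k2
      - det3 (X (j + 1) - X j) (X (j + 2)) (X j) * k1 + km

  have s1 := step (i - 1)
  rw [show (i : ℤ) - 1 + 1 = i from by ring, show (i : ℤ) - 1 + 2 = i + 1 from by ring,
    show (i : ℤ) - 1 - 1 = i - 2 from by ring] at s1
  have s2 := step i
  -- positivity facts
  have hT1 : 0 < det3 (X (i - 1)) (X i) (U (i - 1)) := by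
    have := htrans (i - 1); rwa [show (i : ℤ) - 1 + 1 = i from by ring] at this
  have hT2 : 0 < det3 (X i) (X (i + 1)) (U i) := htrans i
  have hPw : ∀ j : ℤ, 0 < det3 (X j - X (j - 1)) (X (j + 1)) (X (j - 1)) := by
    intro j; rw [pw_eq]; exact hconv j
  have hP0 := hPw (i - 1)
  rw [show (i : ℤ) - 1 + 1 = i from by ring, show (i : ℤ) - 1 - 1 = i - 2 from by ring] at hP0
  have hP1 := hPw i
  have hP2 := hPw (i + 1)
  rw [show (i : ℤ) + 1 - 1 = i from by ring, show (i : ℤ) + 1 + 1 = i + 2 from by ring] at hP2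
  set a1 := det3 (X (i + 1) - X i) (X i - X (i - 1)) (X (i - 1) - X (i - 2)) with ha1
  set a2 := det3 (X (i + 2) - X (i + 1)) (X (i + 1) - X i) (X i - X (i - 1)) with ha2
  set d1 := bYV i - bYV (i - 1) with hd1
  set d2 := bYV (i + 1) - bYV i with hd2
  set Q1 := det3 (X (i - 1) - X (i - 2)) (X i) (X (i - 2)) * det3 (X i - X (i - 1)) (X (i + 1)) (X (i - 1)) with hQ1
  set Q2 := det3 (X i - X (i - 1)) (X (i + 1)) (X (i - 1)) * det3 (X (i + 1) - X i) (X (i + 2)) (X i) with hQ2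
  set T1 := det3 (X (i - 1)) (X i) (U (i - 1)) with hT1e
  set T2 := det3 (X i) (X (i + 1)) (U i) with hT2e
  have hQ1pos : 0 < Q1 := mul_pos hP0 hP1
  have hQ2pos : 0 < Q2 := mul_pos hP1 hP2
  -- s1 : d1 * Q1 = T1 * a1 ; s2 : d2 * Q2 = T2 * a2
  have hprod : (d1 * d2) * (Q1 * Q2) = (T1 * T2) * (a1 * a2) := by
    linear_combination (d2 * Q2) * s1 + (T1 * a1) * s2
  constructor
  · intro h
    by_contra h'
    push_neg at h'
    have h1 : 0 ≤ (d1 * d2) * (Q1 * Q2) := mul_nonneg h' (mul_pos hQ1pos hQ2pos).le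
    have h2 : (T1 * T2) * (a1 * a2) < 0 := mul_neg_of_pos_of_neg (mul_pos hT1 hT2) h
    linarith
  · intro h
    by_contra h'
    push_neg at h'
    have h1 : 0 ≤ (T1 * T2) * (a1 * a2) := mul_nonneg (mul_pos hT1 hT2).le h'
    have h2 : (d1 * d2) * (Q1 * Q2) < 0 := mul_neg_of_neg_of_pos h (mul_pos hQ1pos hQ2pos)
    linarith
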